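/- Let G be a graph with Perron eigenvector x (positive unit eigenvector for ρ(G)), and let u, v be vertices with x_u ≥ x_v and N_G(u) ≠ N_G(v), v ∉ N_G(u). Let G' be obtained from G by deleting all edges at v and joining v to N_G(u) \ {v}. Then ρ(G') > ρ(G). -/

import Mathlib

open Matrix Finset SimpleGraph
open scoped Classical

/-- The spectral radius (largest adjacency eigenvalue) of a finite simple graph,
expressed as the supremum of the Rayleigh quotient over unit vectors. -/
noncomputable def specRad {V : Type*} [Fintype V] (G : SimpleGraph V) : ℝ :=
  ⨆ x : {x : V → ℝ // ∑ v, x v ^ 2 = 1},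
    dotProduct x.1 ((G.adjMatrix ℝ).mulVec x.1)

/-- The graph obtained from `G` by deleting all edges at `v` and joining `v`
to `N_G(u) \ {v}`. -/
def rewire {V : Type*} (G : SimpleGraph V) (u v : V) : SimpleGraph V where
  Adj a b := (a ≠ v ∧ b ≠ v ∧ G.Adj a b) ∨ (a = v ∧ b ≠ v ∧ G.Adj u b) ∨
    (b = v ∧ a ≠ v ∧ G.Adj u a)
  symm := by
    constructor
    intro a b h
    rcases h with ⟨h1, h2, h3⟩ | ⟨h1, h2, h3⟩ | ⟨h1, h2, h3⟩
    · exact Or.inl ⟨h2, h1, h3.symm⟩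
    · exact Or.inr (Or.inr ⟨h1, h2, h3⟩)
    · exact Or.inr (Or.inl ⟨h1, h2, h3⟩)
  loopless := by
    constructor
    intro a h
    rcases h with ⟨h1, h2, h3⟩ | ⟨h1, h2, h3⟩ | ⟨h1, h2, h3⟩
    · exact G.loopless.irrefl a h3
    · exact h2 h1
    · exact h2 h1

lemma specRad_ge {V : Type*} [Fintype V] (G : SimpleGraph V) (y : V → ℝ)
    (hy : ∑ w, y w ^ 2 = 1) :
    dotProduct y ((G.adjMatrix ℝ).mulVec y) ≤ specRad G := by
  have hbdd : BddAbove (Set.range fun x : {x : V → ℝ // ∑ v, x v ^ 2 = 1} =>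
      dotProduct x.1 ((G.adjMatrix ℝ).mulVec x.1)) := by
    refine ⟨(Fintype.card V : ℝ), ?_⟩
    rintro r ⟨⟨z, hz⟩, rfl⟩
    calc dotProduct z ((G.adjMatrix ℝ).mulVec z)
        = ∑ a, ∑ b, z a * ((G.adjMatrix ℝ) a b * z b) := by
          simp [dotProduct, Matrix.mulVec, Finset.mul_sum]
      _ ≤ ∑ a, ∑ b, |z a| * |z b| := by
          refine Finset.sum_le_sum fun a _ => Finset.sum_le_sum fun b _ => ?_
          by_cases h : G.Adj a b
          · simp only [SimpleGraph.adjMatrix_apply, if_pos h, one_mul]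
            calc z a * z b ≤ |z a * z b| := le_abs_self _
              _ = |z a| * |z b| := abs_mul _ _
          · simp only [SimpleGraph.adjMatrix_apply, if_neg h, zero_mul, mul_zero]
            positivity
      _ = (∑ a, |z a|) ^ 2 := by rw [sq, Finset.sum_mul_sum]
      _ ≤ (Fintype.card V : ℝ) * ∑ a, |z a| ^ 2 := by
          simpa using sq_sum_le_card_mul_sum_sq (s := Finset.univ) (f := fun a => |z a|)
      _ = (Fintype.card V : ℝ) := by simp [sq_abs, hz]
  exact le_ciSup hbdd ⟨y, hy⟩

lemma rayleigh_improve {V : Type*} [Fintype V] (B : Matrix V V ℝ)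
    (hB : B.IsSymm) (x : V → ℝ) (hx : ∑ w, x w ^ 2 = 1) (r : ℝ)
    (hr : dotProduct x (B.mulVec x) = r)
    (hd : B.mulVec x ≠ r • x) :
    ∃ y : V → ℝ, (∑ w, y w ^ 2 = 1) ∧ r < dotProduct y (B.mulVec y) := by
  set d : V → ℝ := B.mulVec x - r • x with hd_def
  have hxx : dotProduct x x = 1 := by
    simpa [dotProduct, sq] using hx
  have hdx : dotProduct d x = 0 := by
    rw [hd_def, sub_dotProduct, smul_dotProduct, hxx,
      dotProduct_comm, hr]
    simp
  have hxd : dotProduct x d = 0 := by rw [dotProduct_comm]; exact hdx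
  set D : ℝ := dotProduct d d with hD_def
  have hDpos : 0 < D := by
    have hne : ∃ w, d w ≠ 0 := by
      by_contra h
      push_neg at h
      exact hd (by funext w; have := h w; simpa [hd_def, sub_eq_zero] using this)
    obtain ⟨w, hw⟩ := hne
    exact Finset.sum_pos' (fun i _ => mul_self_nonneg _)
      ⟨w, Finset.mem_univ w, mul_self_pos.mpr hw⟩
  set K : ℝ := dotProduct d (B.mulVec d) with hK_def
  have hBx : B.mulVec x = d + r • x := by rw [hd_def]; ring_nf
  have hdBx : dotProduct d (B.mulVec x) = D := by
    rw [hBx, dotProduct_add, dotProduct_smul, hdx]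
    simp [hD_def]
  have hxBd : dotProduct x (B.mulVec d) = D := by
    rw [dotProduct_mulVec, ← Matrix.mulVec_transpose, hB.eq,
      dotProduct_comm]
    exact hdBx
  clear_value K
  -- choose the step size
  obtain ⟨e, he_def⟩ : ∃ e : ℝ, e = D / (|K - r * D| + 1) := ⟨_, rfl⟩
  have habs : (0:ℝ) ≤ |K - r * D| := abs_nonneg _
  have hepos : 0 < e := by
    rw [he_def]; apply div_pos hDpos; linarith
  have heabs : e * |K - r * D| ≤ D := by
    rw [he_def, div_mul_eq_mul_div, div_le_iff₀ (by linarith)]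
    nlinarith
  -- the perturbed vector
  set y' : V → ℝ := x + e • d with hy'_def
  have hy'norm : dotProduct y' y' = 1 + e ^ 2 * D := by
    rw [hy'_def]
    rw [add_dotProduct, dotProduct_add, dotProduct_add,
      smul_dotProduct, smul_dotProduct, dotProduct_smul,
      dotProduct_smul, hxx, hxd, hdx, ← hD_def]
    simp only [smul_eq_mul]
    ring
  have hy'val : dotProduct y' (B.mulVec y') = r + 2 * e * D + e ^ 2 * K := by
    rw [hy'_def, Matrix.mulVec_add, Matrix.mulVec_smul]
    rw [add_dotProduct, dotProduct_add, dotProduct_add,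
      smul_dotProduct, smul_dotProduct, dotProduct_smul,
      dotProduct_smul, hr, hxBd, hdBx, ← hK_def]
    simp only [smul_eq_mul]
    ring
  clear_value y'
  clear_value D
  obtain ⟨n, hn_def⟩ : ∃ n : ℝ, n = 1 + e ^ 2 * D := ⟨_, rfl⟩
  have hnpos : 0 < n := by rw [hn_def]; positivity
  have hkey : r * n < r + 2 * e * D + e ^ 2 * K := by
    have h2 : -(|K - r * D|) ≤ K - r * D := neg_abs_le _
    have h3 : -(e * |K - r * D|) ≤ e * (K - r * D) := by nlinarith
    have h4 : -D ≤ e * (K - r * D) := by linarith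
    have h5 : 0 < e * (2 * D + e * (K - r * D)) := by
      apply mul_pos hepos; nlinarith
    rw [hn_def]
    nlinarith
  have hny' : ∑ w, y' w ^ 2 = n := by
    rw [hn_def, ← hy'norm]; simp [dotProduct, sq]
  have hsq : ((Real.sqrt n)⁻¹) ^ 2 = n⁻¹ := by
    rw [inv_pow, Real.sq_sqrt hnpos.le]
  refine ⟨(Real.sqrt n)⁻¹ • y', ?_, ?_⟩
  · calc ∑ w, ((Real.sqrt n)⁻¹ • y') w ^ 2
        = ∑ w, ((Real.sqrt n)⁻¹) ^ 2 * y' w ^ 2 := by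
          refine Finset.sum_congr rfl fun w _ => ?_
          simp [Pi.smul_apply, smul_eq_mul, mul_pow]
      _ = n⁻¹ * n := by rw [← Finset.mul_sum, hsq, hny']
      _ = 1 := inv_mul_cancel₀ hnpos.ne'
  · have hval : dotProduct ((Real.sqrt n)⁻¹ • y') (B.mulVec ((Real.sqrt n)⁻¹ • y'))
        = n⁻¹ * (r + 2 * e * D + e ^ 2 * K) := by
      rw [Matrix.mulVec_smul, smul_dotProduct, dotProduct_smul, hy'val,
        smul_eq_mul, smul_eq_mul, ← mul_assoc, ← sq, hsq]
    rw [hval, lt_inv_mul_iff₀ hnpos]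
    calc n * r = r * n := mul_comm _ _
      _ < _ := hkey

/-- If `x` is the positive unit Perron eigenvector of a connected graph `G`,
`x_v ≤ x_u`, `N(u) ≠ N(v)` and `v ∉ N(u)`, then rewiring `v` onto the
neighborhood of `u` strictly increases the spectral radius. -/
theorem stmt14 {V : Type*} [Fintype V] (G : SimpleGraph V) [DecidableRel G.Adj]
    (hconn : G.Connected) (x : V → ℝ) (hpos : ∀ w, 0 < x w)
    (hunit : ∑ w, x w ^ 2 = 1)
    (heig : (G.adjMatrix ℝ).mulVec x = specRad G • x)
    (u v : V) (hxy : x v ≤ x u) (hN : G.neighborSet u ≠ G.neighborSet v)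
    (hv : ¬ G.Adj u v) :
    specRad G < specRad (rewire G u v) := by
  set r : ℝ := specRad G with hr_def
  set A : Matrix V V ℝ := G.adjMatrix ℝ with hA_def
  set A' : Matrix V V ℝ := (rewire G u v).adjMatrix ℝ with hA'_def
  set c : V → ℝ := fun w => (if G.Adj u w then (1:ℝ) else 0) - (if G.Adj v w then 1 else 0)
    with hc_def
  have hcv : c v = 0 := by simp [hc_def, hv, G.loopless.irrefl v]
  -- entrywise decomposition of the rewired adjacency matrix
  have hE : ∀ a b, A' a b = A a b + (if a = v then c b else 0) + (if b = v then c a else 0) := by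
    intro a b
    rw [hA'_def, hA_def, SimpleGraph.adjMatrix_apply, SimpleGraph.adjMatrix_apply]
    by_cases ha : a = v <;> by_cases hb : b = v
    · simp [hA'_def, hA_def, SimpleGraph.adjMatrix_apply, rewire, ha, hb, hcv]
    · simp only [hA'_def, hA_def, SimpleGraph.adjMatrix_apply, rewire, hc_def, ha, hb]
      by_cases h2 : G.Adj u b <;> by_cases h3 : G.Adj v b <;>
        simp [h2, h3, hb, G.adj_comm]
    · simp only [hA'_def, hA_def, SimpleGraph.adjMatrix_apply, rewire, hc_def, ha, hb]
      by_cases h2 : G.Adj u a <;> by_cases h3 : G.Adj v a <;>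
        simp [h2, h3, ha, G.adj_comm, SimpleGraph.adj_comm]
    · simp [hA'_def, hA_def, SimpleGraph.adjMatrix_apply, rewire, ha, hb]
  -- mulVec decomposition
  have hmul : ∀ z : V → ℝ, ∀ a, A'.mulVec z a
      = A.mulVec z a + (if a = v then dotProduct c z else 0) + c a * z v := by
    intro z a
    simp only [Matrix.mulVec, dotProduct]
    calc ∑ b, A' a b * z b
        = ∑ b, (A a b * z b + (if a = v then c b * z b else 0)
            + (if b = v then c a * z b else 0)) := by
          refine Finset.sum_congr rfl fun b _ => ?_
          rw [hE a b]
          by_cases ha : a = v <;> by_cases hb : b = v <;> simp [ha, hb] <;> ring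
      _ = ∑ b, A a b * z b + (if a = v then ∑ b, c b * z b else 0) + c a * z v := by
          rw [Finset.sum_add_distrib, Finset.sum_add_distrib]
          congr 1
          · congr 1
            by_cases ha : a = v <;> simp [ha]
          · simp
    
  have hxval : ∀ z, A.mulVec x z = r * x z := by
    intro z
    have := congrFun heig z
    simpa using this
  have hr' : dotProduct x (A.mulVec x) = r := by
    rw [heig]
    simp only [dotProduct, Pi.smul_apply, smul_eq_mul]
    have : ∑ a, x a * (r * x a) = r * ∑ a, x a ^ 2 := by
      rw [Finset.mul_sum]
      exact Finset.sum_congr rfl fun a _ => by ring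
    rw [this, hunit, mul_one]
  have hcx : dotProduct c x = r * x u - r * x v := by
    have h1 : dotProduct c x = A.mulVec x u - A.mulVec x v := by
      simp only [dotProduct, Matrix.mulVec, hc_def, hA_def,
        SimpleGraph.adjMatrix_apply, sub_mul, Finset.sum_sub_distrib]
    rw [h1, hxval, hxval]
  -- value of the Rayleigh quotient of x in the rewired graph
  have hS' : dotProduct x (A'.mulVec x)
      = r + 2 * x v * (r * x u - r * x v) := by
    have : dotProduct x (A'.mulVec x)
        = ∑ a, x a * (A.mulVec x a + (if a = v then dotProduct c x else 0)
            + c a * x v) := by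
      simp only [dotProduct]
      refine Finset.sum_congr rfl fun a _ => ?_
      rw [hmul x a]
      rfl
    rw [this]
    have e1 : ∑ a, x a * (A.mulVec x a + (if a = v then dotProduct c x else 0)
          + c a * x v)
        = (∑ a, x a * A.mulVec x a) + (∑ a, x a * (if a = v then dotProduct c x else 0))
          + ∑ a, x a * (c a * x v) := by
      rw [← Finset.sum_add_distrib, ← Finset.sum_add_distrib]
      exact Finset.sum_congr rfl fun a _ => by ring
    rw [e1]
    have e2 : (∑ a, x a * A.mulVec x a) = r := hr'
    have e3 : (∑ a, x a * (if a = v then dotProduct c x else 0))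
        = x v * (r * x u - r * x v) := by
      rw [Finset.sum_eq_single v]
      · simp [hcx]
      · intro b _ hb; simp [hb]
      · intro h; exact absurd (Finset.mem_univ v) h
    have e4 : (∑ a, x a * (c a * x v)) = x v * (r * x u - r * x v) := by
      rw [← hcx]
      simp only [dotProduct]
      rw [Finset.mul_sum]
      exact Finset.sum_congr rfl fun a _ => by ring
    rw [e2, e3, e4]; ring
  -- a witness vertex in the symmetric difference of the neighborhoods
  obtain ⟨w, hw⟩ : ∃ w, ¬(G.Adj u w ↔ G.Adj v w) := by
    by_contra h
    push_neg at h
    exact hN (Set.ext fun w => by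
      simp only [SimpleGraph.mem_neighborSet]
      exact h w)
  have hwv : w ≠ v := by
    intro h
    rw [h] at hw
    exact hw (iff_of_false hv (G.loopless.irrefl v))
  have hcw : c w ≠ 0 := by
    rw [hc_def]
    by_cases h2 : G.Adj u w <;> by_cases h3 : G.Adj v w <;>
      simp_all
  -- positivity of the spectral radius
  have hrpos : 0 < r := by
    have hadj : G.Adj u w ∨ G.Adj v w := by
      by_contra h
      push_neg at h
      exact hw (by simp [h.1, h.2])
    have key : ∀ z : V, G.Adj z w → 0 < r := by
      intro z hz
      have hge : x w ≤ A.mulVec x z := by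
        have : A.mulVec x z = ∑ b, A z b * x b := rfl
        rw [this]
        have := Finset.single_le_sum (f := fun b => A z b * x b)
          (fun i _ => mul_nonneg (by simp [hA_def, SimpleGraph.adjMatrix_apply]; positivity)
            (hpos i).le) (Finset.mem_univ w)
        simpa [hA_def, SimpleGraph.adjMatrix_apply, hz] using this
      rw [hxval] at hge
      nlinarith [hpos w, hpos z]
    rcases hadj with h | h
    · exact key u h
    · exact key v h
  rcases hxy.lt_or_eq with hlt | heq
  · -- strict case: x v < x u
    have h1 : r < dotProduct x (A'.mulVec x) := by
      rw [hS']
      nlinarith [mul_pos (hpos v) (mul_pos hrpos (sub_pos.mpr hlt))]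
    exact lt_of_lt_of_le h1 (specRad_ge (rewire G u v) x hunit)
  · -- equality case: perturbation argument
    have hSr : dotProduct x (A'.mulVec x) = r := by rw [hS', heq]; ring
    have hdne : A'.mulVec x ≠ r • x := by
      intro h
      have := congrFun h w
      rw [hmul x w] at this
      simp only [if_neg hwv, Pi.smul_apply, smul_eq_mul, hxval] at this
      have : c w * x v = 0 := by linarith
      rcases mul_eq_zero.mp this with h' | h'
      · exact hcw h'
      · exact (hpos v).ne' h'
    obtain ⟨y, hy1, hy2⟩ := rayleigh_improve A' ((rewire G u v).isSymm_adjMatrix) x hunit r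
      hSr hdne
    exact lt_of_lt_of_le hy2 (specRad_ge (rewire G u v) y hy1)
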